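/- Let p ≥ 1 and, for l = 1,…,p, let T^{(l)}, R^{(l)} ∈ M_n(ℂ) and positive integers k_l be given such that: [T^{(i)}, T^{(l)}] = 0 for all i,l; [R^{(i)}, R^{(l)}] = 0 for all i,l; [T^{(i)}, R^{(l)}] = 0 whenever i ≠ l; and x^{T^{(l)}} R^{(l)} x^{−T^{(l)}} = x^{k_l}·R^{(l)} for every x ∈ ℂ∖(−∞,0] and every l. Then the matrix-valued function Z(x_1,…,x_p) := (∏_{l=1}^p x_l^{T^{(l)}}) · (∏_{l=1}^p x_l^{R^{(l)}}) on (ℂ∖(−∞,0])^p satisfies, for each i = 1,…,p, the partial differential equation ∂Z/∂x_i = x_i^{-1}·(T^{(i)} + R^{(i)} x_i^{k_i})·Z. -/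

import Mathlib

attribute [local instance] Matrix.linftyOpNormedAddCommGroup Matrix.linftyOpNormedRing
  Matrix.linftyOpNormedAlgebra

/-- `x^M := exp((log x)·M)`, with the principal branch of the complex logarithm and the
matrix exponential. -/
noncomputable def mpow {n : ℕ} (x : ℂ) (M : Matrix (Fin n) (Fin n) ℂ) :
    Matrix (Fin n) (Fin n) ℂ :=
  NormedSpace.exp (Complex.log x • M)

section Aux

variable {n : ℕ}

lemma mpow_hasDerivAt (M : Matrix (Fin n) (Fin n) ℂ) {x : ℂ} (hx : x ∈ Complex.slitPlane) :
    HasDerivAt (fun t => mpow t M) (x⁻¹ • (M * mpow x M)) x := by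
  have h1 := hasDerivAt_exp_smul_const' (𝕂 := ℂ) M (Complex.log x)
  have h2 := Complex.hasDerivAt_log hx
  exact h1.scomp x h2

lemma commute_mpow {M N : Matrix (Fin n) (Fin n) ℂ} (h : Commute M N) (x : ℂ) :
    Commute M (mpow x N) :=
  (h.smul_right _).exp_right

lemma mpow_neg_mul (x : ℂ) (M : Matrix (Fin n) (Fin n) ℂ) : mpow x (-M) * mpow x M = 1 := by
  rw [mpow, mpow, smul_neg]
  erw [← NormedSpace.exp_add_of_commute ((Commute.refl _).neg_left),
    neg_add_cancel, NormedSpace.exp_zero]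

lemma conj_swap {T R : Matrix (Fin n) (Fin n) ℂ} {x : ℂ} {c : ℂ}
    (h : mpow x T * R * mpow x (-T) = c • R) :
    mpow x T * R = c • (R * mpow x T) := by
  have h1 : mpow x (-T) * mpow x T = 1 := mpow_neg_mul x T
  calc mpow x T * R = mpow x T * R * (mpow x (-T) * mpow x T) := by rw [h1, mul_one]
    _ = (mpow x T * R * mpow x (-T)) * mpow x T := by rw [mul_assoc, mul_assoc, mul_assoc]
    _ = c • (R * mpow x T) := by rw [h, smul_mul_assoc]

variable {𝔸 : Type*} {ι : Type*} [DecidableEq ι]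

lemma map_if_of_not_mem [Ring 𝔸] (g h' : ι → 𝔸) (i : ι) (l : List ι) (hi : i ∉ l) :
    (l.map fun j => if j = i then h' j else g j) = l.map g :=
  List.map_congr_left fun j hj => if_neg (fun (e : j = i) => hi (e ▸ hj))

lemma prod_if_smul_mul [Ring 𝔸] [Algebra ℂ 𝔸] (g : ι → 𝔸) (M : 𝔸) (c : ℂ) (i : ι) :
    ∀ l : List ι, l.Nodup → i ∈ l → (∀ j ∈ l, Commute M (g j)) →
    (l.map fun j => if j = i then c • (M * g j) else g j).prod = c • (M * (l.map g).prod)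
  | [] => by simp
  | a :: l => by
    intro hnd hmem hcomm
    obtain ⟨ha, hl⟩ := List.nodup_cons.mp hnd
    by_cases hai : a = i
    · subst hai
      simp only [List.map_cons, List.prod_cons, eq_self_iff_true, if_true,
        map_if_of_not_mem g (fun j => c • (M * g j)) a l ha]
      rw [smul_mul_assoc, mul_assoc]
    · have hmem' : i ∈ l := (List.mem_cons.mp hmem).resolve_left fun e => hai e.symm
      simp only [List.map_cons, List.prod_cons, if_neg hai]
      rw [prod_if_smul_mul g M c i l hl hmem'
        (fun j hj => hcomm j (List.mem_cons_of_mem _ hj)),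
        mul_smul_comm, ← mul_assoc, ← (hcomm a (List.mem_cons_self)).eq, mul_assoc]

lemma prod_mul_right [Ring 𝔸] [Algebra ℂ 𝔸] (g : ι → 𝔸) (M : 𝔸) (c : ℂ) (i : ι) :
    ∀ l : List ι, l.Nodup → i ∈ l → (∀ j ∈ l, j ≠ i → Commute (g j) M) →
    g i * M = c • (M * g i) →
    (l.map g).prod * M = c • (M * (l.map g).prod)
  | [] => by simp
  | a :: l => by
    intro hnd hmem hcomm hswap
    obtain ⟨ha, hl⟩ := List.nodup_cons.mp hnd
    simp only [List.map_cons, List.prod_cons]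
    by_cases hai : a = i
    · subst hai
      have hC : Commute M (l.map g).prod := by
        apply Commute.list_prod_right
        intro y hy
        obtain ⟨j, hj, rfl⟩ := List.mem_map.mp hy
        exact (hcomm j (List.mem_cons_of_mem _ hj) (fun (e : j = a) => ha (e ▸ hj))).symm
      calc g a * (l.map g).prod * M = g a * ((l.map g).prod * M) := by rw [mul_assoc]
        _ = g a * (M * (l.map g).prod) := by rw [hC.eq]
        _ = (g a * M) * (l.map g).prod := by rw [mul_assoc]
        _ = (c • (M * g a)) * (l.map g).prod := by rw [hswap]
        _ = c • (M * (g a * (l.map g).prod)) := by rw [smul_mul_assoc, mul_assoc]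
    · have hmem' : i ∈ l := (List.mem_cons.mp hmem).resolve_left fun e => hai e.symm
      have ih := prod_mul_right g M c i l hl hmem'
        (fun j hj hji => hcomm j (List.mem_cons_of_mem _ hj) hji) hswap
      calc g a * (l.map g).prod * M = g a * ((l.map g).prod * M) := by rw [mul_assoc]
        _ = g a * (c • (M * (l.map g).prod)) := by rw [ih]
        _ = c • ((g a * M) * (l.map g).prod) := by rw [mul_smul_comm, mul_assoc]
        _ = c • ((M * g a) * (l.map g).prod) := by
              rw [(hcomm a (List.mem_cons_self) hai).eq]
        _ = c • (M * (g a * (l.map g).prod)) := by rw [mul_assoc]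

lemma hasDerivAt_prod_if [NormedRing 𝔸] [NormedAlgebra ℂ 𝔸]
    (g : ι → 𝔸) (h : ℂ → 𝔸) (d : 𝔸) {x : ℂ} (hd : HasDerivAt h d x) (i : ι) :
    ∀ l : List ι, l.Nodup → i ∈ l →
    HasDerivAt (fun t => (l.map fun j => if j = i then h t else g j).prod)
      ((l.map fun j => if j = i then d else g j).prod) x
  | [] => by intro _ h; simp at h
  | a :: l => by
    intro hnd hmem
    obtain ⟨ha, hl⟩ := List.nodup_cons.mp hnd
    by_cases hai : a = i
    · subst hai
      have key : ∀ t : ℂ, (l.map fun j => if j = a then h t else g j) = l.map g :=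
        fun t => map_if_of_not_mem g (fun _ => h t) a l ha
      have key2 : (l.map fun j => if j = a then d else g j) = l.map g :=
        map_if_of_not_mem g (fun _ => d) a l ha
      have hder : HasDerivAt (fun t => h t * (l.map g).prod) (d * (l.map g).prod) x :=
        hd.mul_const _
      simp only [List.map_cons, List.prod_cons, eq_self_iff_true, if_true, key, key2]
      exact hder
    · have hmem' : i ∈ l := (List.mem_cons.mp hmem).resolve_left fun e => hai e.symm
      have ih := hasDerivAt_prod_if g h d hd i l hl hmem'
      simp only [List.map_cons, List.prod_cons, if_neg hai]
      exact ih.const_mul (g a)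

end Aux

/-- given commuting families `T^{(l)}, R^{(l)}` with
`x^{T^{(l)}} R^{(l)} x^{−T^{(l)}} = x^{k_l}·R^{(l)}`, the function
`Z(x) := (∏_l x_l^{T^{(l)}})·(∏_l x_l^{R^{(l)}})` (products in increasing order of `l`)
satisfies `∂Z/∂x_i = x_i⁻¹(T^{(i)} + R^{(i)} x_i^{k_i})·Z` for each `i`. -/
theorem stmt14 {n p : ℕ} (hp : 1 ≤ p)
    (T R : Fin p → Matrix (Fin n) (Fin n) ℂ) (k : Fin p → ℕ) (hk : ∀ l, 0 < k l)
    (hTT : ∀ i l : Fin p, T i * T l = T l * T i)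
    (hRR : ∀ i l : Fin p, R i * R l = R l * R i)
    (hTR : ∀ i l : Fin p, i ≠ l → T i * R l = R l * T i)
    (hconj : ∀ x : ℂ, x ∈ Complex.slitPlane → ∀ l : Fin p,
      mpow x (T l) * R l * mpow x (-(T l)) = (x ^ (k l : ℂ)) • R l)
    (Z : (Fin p → ℂ) → Matrix (Fin n) (Fin n) ℂ)
    (hZ : ∀ x : Fin p → ℂ, Z x =
      (List.ofFn fun l => mpow (x l) (T l)).prod *
        (List.ofFn fun l => mpow (x l) (R l)).prod) :
    ∀ x : Fin p → ℂ, (∀ l, x l ∈ Complex.slitPlane) → ∀ i : Fin p, ∀ a b : Fin n,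
      HasDerivAt (fun t : ℂ => Z (Function.update x i t) a b)
        (((x i)⁻¹ • ((T i + (x i ^ (k i : ℂ)) • R i) * Z x)) a b) (x i) := by
  intro x hx i a b
  set c : ℂ := (x i) ^ (k i : ℂ) with hc
  set gT : Fin p → Matrix (Fin n) (Fin n) ℂ := fun j => mpow (x j) (T j) with hgT
  set gR : Fin p → Matrix (Fin n) (Fin n) ℂ := fun j => mpow (x j) (R j) with hgR
  set A : Matrix (Fin n) (Fin n) ℂ := ((List.finRange p).map gT).prod with hA
  set B : Matrix (Fin n) (Fin n) ℂ := ((List.finRange p).map gR).prod with hB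
  -- derivative of the two product factors
  have hAd := hasDerivAt_prod_if gT (fun t => mpow t (T i)) ((x i)⁻¹ • (T i * mpow (x i) (T i)))
    (mpow_hasDerivAt (T i) (hx i)) i (List.finRange p) (List.nodup_finRange p)
    (List.mem_finRange i)
  have hBd := hasDerivAt_prod_if gR (fun t => mpow t (R i)) ((x i)⁻¹ • (R i * mpow (x i) (R i)))
    (mpow_hasDerivAt (R i) (hx i)) i (List.finRange p) (List.nodup_finRange p)
    (List.mem_finRange i)
  have hmul := hAd.mul hBd
  beta_reduce at hmul
  simp only [Pi.mul_def] at hmul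
  -- identify the function with `t ↦ Z (update x i t)`
  have hfun : (fun t : ℂ =>
      ((List.finRange p).map fun j => if j = i then mpow t (T i) else gT j).prod *
        ((List.finRange p).map fun j => if j = i then mpow t (R i) else gR j).prod)
      = fun t => Z (Function.update x i t) := by
    funext t
    rw [hZ, List.ofFn_eq_map, List.ofFn_eq_map]
    congr 1
    · refine congrArg List.prod (List.map_congr_left fun j _ => ?_)
      by_cases hji : j = i
      · subst hji; simp
      · simp [hji, hgT, Function.update_of_ne hji]
    · refine congrArg List.prod (List.map_congr_left fun j _ => ?_)
      by_cases hji : j = i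
      · subst hji; simp
      · simp [hji, hgR, Function.update_of_ne hji]
  rw [hfun] at hmul
  -- identify the static products with A and B
  have eA2 : ((List.finRange p).map fun j => if j = i then mpow (x i) (T i) else gT j).prod
      = A := by
    rw [hA]
    refine congrArg List.prod (List.map_congr_left fun j _ => ?_)
    by_cases hji : j = i
    · subst hji; simp [hgT]
    · simp [hji]
  have eB2 : ((List.finRange p).map fun j => if j = i then mpow (x i) (R i) else gR j).prod
      = B := by
    rw [hB]
    refine congrArg List.prod (List.map_congr_left fun j _ => ?_)
    by_cases hji : j = i
    · subst hji; simp [hgR]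
    · simp [hji]
  -- identify the derivative pieces
  have hA' : ((List.finRange p).map fun j =>
      if j = i then (x i)⁻¹ • (T i * mpow (x i) (T i)) else gT j).prod
      = (x i)⁻¹ • (T i * A) := by
    have e1 : (fun j => if j = i then (x i)⁻¹ • (T i * mpow (x i) (T i)) else gT j)
        = fun j => if j = i then (x i)⁻¹ • (T i * gT j) else gT j := by
      funext j; by_cases hji : j = i
      · subst hji; simp [hgT]
      · simp [hji]
    rw [e1]
    exact prod_if_smul_mul gT (T i) (x i)⁻¹ i (List.finRange p) (List.nodup_finRange p)
      (List.mem_finRange i) (fun j _ => commute_mpow (hTT i j) (x j))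
  have hB' : ((List.finRange p).map fun j =>
      if j = i then (x i)⁻¹ • (R i * mpow (x i) (R i)) else gR j).prod
      = (x i)⁻¹ • (R i * B) := by
    have e1 : (fun j => if j = i then (x i)⁻¹ • (R i * mpow (x i) (R i)) else gR j)
        = fun j => if j = i then (x i)⁻¹ • (R i * gR j) else gR j := by
      funext j; by_cases hji : j = i
      · subst hji; simp [hgR]
      · simp [hji]
    rw [e1]
    exact prod_if_smul_mul gR (R i) (x i)⁻¹ i (List.finRange p) (List.nodup_finRange p)
      (List.mem_finRange i) (fun j _ => commute_mpow (hRR i j) (x j))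
  rw [hA', hB', eA2, eB2] at hmul
  have hAR : A * R i = c • (R i * A) := by
    apply prod_mul_right gT (R i) c i (List.finRange p) (List.nodup_finRange p)
      (List.mem_finRange i)
    · intro j _ hji
      exact (commute_mpow ((hTR j i hji).symm : Commute (R i) (T j)) (x j)).symm
    · exact conj_swap (hconj (x i) (hx i) i)
  have hZx : Z x = A * B := by
    rw [hZ, List.ofFn_eq_map, List.ofFn_eq_map]
  have hval : (x i)⁻¹ • (T i * A) * B + A * ((x i)⁻¹ • (R i * B))
      = (x i)⁻¹ • ((T i + c • R i) * Z x) := by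
    rw [hZx, add_mul, smul_mul_assoc, smul_mul_assoc, mul_smul_comm, mul_assoc,
      ← mul_assoc A (R i) B, hAR, smul_mul_assoc, mul_assoc, smul_add, smul_smul]
  rw [hval] at hmul
  -- extract the (a, b) entry
  let φL : Matrix (Fin n) (Fin n) ℂ →ₗ[ℂ] ℂ :=
    { toFun := fun M => M a b
      map_add' := fun _ _ => rfl
      map_smul' := fun _ _ => rfl }
  exact (φL.toContinuousLinearMap.hasFDerivAt).comp_hasDerivAt (x i) hmul
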